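/- Let A be an n×n real symmetric matrix with 0 ⪯ A ⪯ σI for some σ < 1, let x* ∈ ℝⁿ, and define iterates x_i = A(x_{i−1} − x*) + x* from x₀. Let U = [x₁ − x₀, …, x_{k+1} − x_k] ∈ ℝ^{n×(k+1)} and let c* be a minimizer of ‖Uc‖₂ over vectors c ∈ ℝ^{k+1} with 𝟏ᵀc = 1. Then ‖Σ_{i=0}^{k} c*_i x_i − x*‖₂ ≤ κ(A−I) · (2ζ^k/(1+ζ^{2k})) · ‖x₀ − x*‖₂, where ζ = (1 − √(1−σ))/(1 + √(1−σ)) and κ(A−I) = ‖A−I‖₂‖(A−I)^{-1}‖₂ is the condition number of A−I in spectral norm. -/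

import Mathlib

open scoped Matrix.Norms.L2Operator
open Matrix

/-- The Euclidean (ℓ₂) norm of a vector in `ℝⁿ`. -/
noncomputable def euclNorm {n : ℕ} (v : Fin n → ℝ) : ℝ := Real.sqrt (∑ i, v i ^ 2)

section AuxCheb

open Polynomial Polynomial.Chebyshev

lemma ampe_chebNatDegreeLe : ∀ m : ℕ, (T ℝ (m:ℤ)).natDegree ≤ m
  | 0 => by simp [T_zero]
  | 1 => by simp [T_one]
  | (m+2) => by
      have h1 := ampe_chebNatDegreeLe (m+1)
      have h0 := ampe_chebNatDegreeLe m
      rw [show ((m+2:ℕ):ℤ) = ((m:ℤ))+2 by push_cast; ring, T_add_two]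
      refine le_trans (natDegree_sub_le _ _) ?_
      simp only [max_le_iff]
      constructor
      · refine le_trans (natDegree_mul_le) ?_
        have h3 : (2 * X : ℝ[X]).natDegree ≤ 1 := by
          refine le_trans (natDegree_mul_le) ?_
          simp
        have h2 : ((m:ℤ)+1) = ((m+1:ℕ):ℤ) := by push_cast; ring
        rw [h2]
        omega
      · omega

lemma ampe_chebEvalCosh (y : ℝ) (hy : 0 < y) : ∀ m : ℕ,
    (T ℝ (m:ℤ)).eval ((y + y⁻¹)/2) = (y^m + y⁻¹^m)/2
  | 0 => by simp [T_zero]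
  | 1 => by simp [T_one]
  | (m+2) => by
      have h1 := ampe_chebEvalCosh y hy (m+1)
      have h0 := ampe_chebEvalCosh y hy m
      have hy' : y ≠ 0 := ne_of_gt hy
      rw [show ((m+2:ℕ):ℤ) = ((m:ℤ))+2 by push_cast; ring, T_add_two]
      rw [show ((m:ℤ)+1) = ((m+1:ℕ):ℤ) by push_cast; ring]
      simp only [eval_sub, eval_mul, eval_ofNat, eval_X, h1, h0]
      have hyy : y * y⁻¹ = 1 := mul_inv_cancel₀ hy'
      linear_combination (y⁻¹^m + y^m)/2 * hyy

lemma ampe_chebAbsLe (m : ℕ) (t : ℝ) (h1 : -1 ≤ t) (h2 : t ≤ 1) :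
    |(T ℝ (m:ℤ)).eval t| ≤ 1 := by
  rw [← Real.cos_arccos h1 h2, T_real_cos]
  exact Real.abs_cos_le_one _

lemma ampe_poly_eval_fin {k : ℕ} (Q : ℝ[X]) (hQ : Q.natDegree ≤ k) (t : ℝ) :
    ∑ j : Fin (k+1), Q.coeff (j:ℕ) * t^(j:ℕ) = Q.eval t := by
  rw [Polynomial.eval_eq_sum_range' (Nat.lt_succ_of_le hQ)]
  rw [Fin.sum_univ_eq_sum_range (fun j => Q.coeff j * t^j)]

section
variable {σ ζ : ℝ} (hσ0 : 0 < σ) (hσ1 : σ < 1)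
  (hζ : ζ = (1 - Real.sqrt (1 - σ)) / (1 + Real.sqrt (1 - σ)))

include hσ0 hσ1 hζ

lemma ampe_zeta_pos : 0 < ζ := by
  have hsq : Real.sqrt (1 - σ) ^ 2 = 1 - σ := Real.sq_sqrt (by linarith)
  have hnn := Real.sqrt_nonneg (1 - σ)
  have h1 : Real.sqrt (1 - σ) < 1 := by nlinarith
  have h2 : 0 < Real.sqrt (1 - σ) := Real.sqrt_pos.mpr (by linarith)
  rw [hζ]
  apply div_pos <;> linarith

lemma ampe_zeta_cosh : (ζ⁻¹ + (ζ⁻¹)⁻¹)/2 = 2/σ - 1 := by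
  have h2 : 0 < Real.sqrt (1 - σ) := Real.sqrt_pos.mpr (by linarith)
  have hsq : Real.sqrt (1 - σ) ^ 2 = 1 - σ := Real.sq_sqrt (by linarith)
  have hnn := Real.sqrt_nonneg (1 - σ)
  have h1 : Real.sqrt (1 - σ) < 1 := by nlinarith
  set s := Real.sqrt (1 - σ)
  have hz : ζ ≠ 0 := ne_of_gt (ampe_zeta_pos hσ0 hσ1 hζ)
  rw [inv_inv, hζ]
  rw [hζ] at hz
  have hs1 : (1:ℝ) + s ≠ 0 := by linarith
  have hs2 : (1:ℝ) - s ≠ 0 := by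
    intro h; rw [sub_eq_zero] at h; linarith
  field_simp
  nlinarith [hsq, sq_nonneg s]

lemma ampe_tval_eq (k : ℕ) :
    (T ℝ (k:ℤ)).eval (2/σ - 1) = (1 + ζ^(2*k))/(2 * ζ^k) := by
  have hz : 0 < ζ := ampe_zeta_pos hσ0 hσ1 hζ
  have h := ampe_chebEvalCosh ζ⁻¹ (by positivity) k
  rw [ampe_zeta_cosh hσ0 hσ1 hζ] at h
  have hzk : (0:ℝ) < ζ^k := by positivity
  rw [h, inv_inv, inv_pow, two_mul k, pow_add]
  field_simp
  try exact Or.inl trivial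

end

end AuxCheb

section AuxSpec

lemma ampe_euclNorm_eq {n : ℕ} (v : Fin n → ℝ) :
    euclNorm v = ‖((WithLp.equiv 2 (Fin n → ℝ)).symm v : EuclideanSpace ℝ (Fin n))‖ := by
  rw [EuclideanSpace.norm_eq]
  simp [euclNorm, Real.norm_eq_abs, sq_abs]

lemma ampe_sum_mulVec {n m : ℕ} {s : Finset (Fin m)} (M : Fin m → Matrix (Fin n) (Fin n) ℝ)
    (v : Fin n → ℝ) : (∑ j ∈ s, M j) *ᵥ v = ∑ j ∈ s, (M j) *ᵥ v := by
  ext r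
  simp [Matrix.mulVec, dotProduct, Matrix.sum_apply, Finset.sum_mul]
  rw [Finset.sum_comm]

lemma ampe_inner_dot {n : ℕ} (u v : EuclideanSpace ℝ (Fin n)) :
    (inner ℝ u v : ℝ) = ⇑u ⬝ᵥ ⇑v := by
  simp [PiLp.inner_apply, dotProduct, RCLike.inner_apply, mul_comm]

lemma ampe_opNorm_mulVec {n m : ℕ} (M : Matrix (Fin m) (Fin n) ℝ) (v : Fin n → ℝ) :
    euclNorm (M *ᵥ v) ≤ ‖M‖ * euclNorm v := by
  rw [ampe_euclNorm_eq, ampe_euclNorm_eq]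
  exact M.l2_opNorm_mulVec ((WithLp.equiv 2 (Fin n → ℝ)).symm v)

lemma ampe_specBound {n k : ℕ} (A : Matrix (Fin n) (Fin n) ℝ) (hA : A.IsHermitian)
    (c : Fin (k+1) → ℝ) (M : ℝ) (hM : 0 ≤ M)
    (hp : ∀ i, |∑ j : Fin (k+1), c j * hA.eigenvalues i ^ (j:ℕ)| ≤ M)
    (w : Fin n → ℝ) :
    euclNorm ((∑ j : Fin (k+1), c j • A^(j:ℕ)) *ᵥ w) ≤ M * euclNorm w := by
  classical
  set b := hA.eigenvectorBasis with hb
  set lam := hA.eigenvalues with hlam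
  set S : Matrix (Fin n) (Fin n) ℝ := ∑ j : Fin (k+1), c j • A^(j:ℕ) with hSdef
  have hpow : ∀ (m : ℕ) (i : Fin n), (A^m) *ᵥ ⇑(b i) = (lam i)^m • ⇑(b i) := by
    intro m i
    induction m with
    | zero => simp
    | succ m ih =>
        rw [pow_succ', ← Matrix.mulVec_mulVec, ih, Matrix.mulVec_smul,
          hA.mulVec_eigenvectorBasis, smul_smul, pow_succ]
  have hS : ∀ i, S *ᵥ ⇑(b i) = (∑ j : Fin (k+1), c j * lam i ^ (j:ℕ)) • ⇑(b i) := by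
    intro i
    rw [hSdef, ampe_sum_mulVec]
    rw [Finset.sum_smul]
    congr 1
    ext j
    rw [Matrix.smul_mulVec, hpow, smul_smul]
  have hSsymm : Sᵀ = S := by
    rw [hSdef, Matrix.transpose_sum]
    congr 1; ext j
    have hAT : Aᵀ = A := by
      ext a bb
      have := congrFun (congrFun hA.eq a) bb
      simpa using this
    rw [Matrix.transpose_smul, Matrix.transpose_pow, hAT]
  set W : EuclideanSpace ℝ (Fin n) := (WithLp.equiv 2 (Fin n → ℝ)).symm w with hW
  set W' : EuclideanSpace ℝ (Fin n) := (WithLp.equiv 2 (Fin n → ℝ)).symm (S *ᵥ w) with hW'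
  have hrepr : ∀ i, b.repr W' i = (∑ j : Fin (k+1), c j * lam i ^ (j:ℕ)) * b.repr W i := by
    intro i
    rw [b.repr_apply_apply, b.repr_apply_apply, ampe_inner_dot, ampe_inner_dot]
    have h1 : ⇑W' = S *ᵥ w := rfl
    have h2 : ⇑W = w := rfl
    rw [h1, h2, Matrix.dotProduct_mulVec, ← Matrix.mulVec_transpose, hSsymm, hS,
      smul_dotProduct, smul_eq_mul]
  have hnW' : euclNorm (S *ᵥ w) = ‖W'‖ := ampe_euclNorm_eq _
  have hnW : euclNorm w = ‖W‖ := ampe_euclNorm_eq _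
  rw [hnW', hnW, ← b.repr.norm_map W', ← b.repr.norm_map W]
  rw [EuclideanSpace.norm_eq, EuclideanSpace.norm_eq]
  rw [← Real.sqrt_sq hM, ← Real.sqrt_mul (by positivity)]
  apply Real.sqrt_le_sqrt
  rw [Finset.mul_sum]
  apply Finset.sum_le_sum
  intro i _
  rw [hrepr i]
  simp only [Real.norm_eq_abs, sq_abs]
  rw [mul_pow]
  have h3 := hp i
  have h2 : (∑ j : Fin (k+1), c j * lam i ^ (j:ℕ))^2 ≤ M^2 := by
    rw [← sq_abs]
    exact pow_le_pow_left₀ (abs_nonneg _) h3 2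
  nlinarith [sq_nonneg (b.repr W i)]

end AuxSpec

/-- Convergence bound for approximate minimal polynomial extrapolation (AMPE)
applied to linear iterations with a symmetric matrix `0 ⪯ A ⪯ σ I`, `σ < 1`. -/
theorem ampe_rate {n k : ℕ} (A : Matrix (Fin n) (Fin n) ℝ) (hA : A.IsSymm)
    (σ : ℝ) (hσ : σ < 1)
    (hA0 : A.PosSemidef) (hAσ : (σ • (1 : Matrix (Fin n) (Fin n) ℝ) - A).PosSemidef)
    (xstar : Fin n → ℝ) (x : ℕ → Fin n → ℝ)
    (hx : ∀ i : ℕ, x (i + 1) = A.mulVec (x i - xstar) + xstar)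
    (U : Matrix (Fin n) (Fin (k + 1)) ℝ)
    (hU : ∀ (r : Fin n) (j : Fin (k + 1)), U r j = (x ((j : ℕ) + 1) - x (j : ℕ)) r)
    (cstar : Fin (k + 1) → ℝ) (hcs : ∑ i, cstar i = 1)
    (hmin : ∀ c : Fin (k + 1) → ℝ, ∑ i, c i = 1 →
      euclNorm (U.mulVec cstar) ≤ euclNorm (U.mulVec c))
    (ζ : ℝ) (hζ : ζ = (1 - Real.sqrt (1 - σ)) / (1 + Real.sqrt (1 - σ))) :
    euclNorm ((∑ i : Fin (k + 1), cstar i • x i) - xstar) ≤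
      (‖A - 1‖ * ‖(A - 1)⁻¹‖) * (2 * ζ ^ k / (1 + ζ ^ (2 * k))) * euclNorm (x 0 - xstar) := by
  classical
  rcases Nat.eq_zero_or_pos n with rfl | hn
  · have hz : ∀ v : Fin 0 → ℝ, euclNorm v = 0 := by
      intro v; simp [euclNorm]
    rw [hz, hz, mul_zero]
  -- now n > 0
  set e : Fin n → ℝ := x 0 - xstar with he
  have hHerm : A.IsHermitian := hA0.1
  set lam : Fin n → ℝ := hHerm.eigenvalues with hlamdef
  -- iterates
  have hiter : ∀ i : ℕ, x i - xstar = (A^i) *ᵥ e := by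
    intro i
    induction i with
    | zero => simp [he]
    | succ i ih =>
        have : x (i+1) - xstar = A *ᵥ (x i - xstar) := by
          rw [hx i]; simp
        rw [this, ih, Matrix.mulVec_mulVec, ← pow_succ']
  set S : (Fin (k+1) → ℝ) → Matrix (Fin n) (Fin n) ℝ :=
    fun c => ∑ j : Fin (k+1), c j • A^(j:ℕ) with hSdef
  have hUc : ∀ c : Fin (k+1) → ℝ, U *ᵥ c = (A - 1) *ᵥ (S c *ᵥ e) := by
    intro c
    have hcol : ∀ j : Fin (k+1), (fun r => U r j) = ((A - 1) * A^(j:ℕ)) *ᵥ e := by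
      intro j
      funext r
      have h1 : U r j = ((x ((j:ℕ)+1) - xstar) - (x (j:ℕ) - xstar)) r := by
        rw [hU r j]; simp
      rw [h1, hiter, hiter]
      have h2 : (A^((j:ℕ)+1)) *ᵥ e - (A^(j:ℕ)) *ᵥ e = ((A - 1) * A^(j:ℕ)) *ᵥ e := by
        rw [Matrix.sub_mul, Matrix.one_mul, ← pow_succ', Matrix.sub_mulVec]
      rw [← h2]
    have hrhs : (A - 1) *ᵥ (S c *ᵥ e) = ∑ j : Fin (k+1), c j • (((A - 1) * A^(j:ℕ)) *ᵥ e) := by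
      rw [Matrix.mulVec_mulVec, hSdef]
      simp only []
      rw [Finset.mul_sum]
      have : ∀ j : Fin (k+1), (A - 1) * (c j • A^(j:ℕ)) = c j • ((A - 1) * A^(j:ℕ)) := by
        intro j; rw [Matrix.mul_smul]
      simp_rw [this]
      rw [ampe_sum_mulVec]
      congr 1
      funext j
      rw [Matrix.smul_mulVec]
    rw [hrhs]
    funext r
    rw [Finset.sum_apply]
    simp only [Matrix.mulVec, dotProduct]
    rw [Finset.sum_congr rfl (fun j _ => by
      rw [show U r j = (((A - 1) * A^(j:ℕ)) *ᵥ e) r from congrFun (hcol j) r])]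
    congr 1
    funext j
    rw [Pi.smul_apply, smul_eq_mul, mul_comm]
  have hsum : (∑ i : Fin (k+1), cstar i • x i) - xstar = S cstar *ᵥ e := by
    have h1 : (∑ i : Fin (k+1), cstar i • x i) - xstar
        = ∑ i : Fin (k+1), cstar i • (x i - xstar) := by
      simp only [smul_sub]
      rw [Finset.sum_sub_distrib, ← Finset.sum_smul, hcs, one_smul]
    rw [h1, hSdef]
    simp only []
    rw [ampe_sum_mulVec]
    congr 1
    funext i
    rw [Matrix.smul_mulVec, hiter]
  -- invertibility of A - 1
  have hdotpos : ∀ v : Fin n → ℝ, v ≠ 0 → 0 < v ⬝ᵥ v := by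
    intro v hv
    obtain ⟨i, hi⟩ := Function.ne_iff.mp hv
    have hi' : v i ≠ 0 := by simpa using hi
    have h2 : 0 < v i * v i := mul_self_pos.mpr hi'
    exact Finset.sum_pos' (fun j _ => mul_self_nonneg _) ⟨i, Finset.mem_univ i, h2⟩
  have hquad : ∀ v : Fin n → ℝ, v ⬝ᵥ (A *ᵥ v) ≤ σ * (v ⬝ᵥ v) := by
    intro v
    have hv := hAσ.dotProduct_mulVec_nonneg v
    rw [star_trivial, Matrix.sub_mulVec, Matrix.smul_mulVec, Matrix.one_mulVec,
      dotProduct_sub, dotProduct_smul, smul_eq_mul] at hv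
    linarith
  have hposdef : (1 - A).PosDef := by
    refine Matrix.PosDef.of_dotProduct_mulVec_pos (Matrix.isHermitian_one.sub hHerm) (fun v hv => ?_)
    rw [star_trivial, Matrix.sub_mulVec, Matrix.one_mulVec, dotProduct_sub]
    have h1 := hquad v
    have h2 := hdotpos v hv
    nlinarith
  have hdet : IsUnit (A - 1).det := by
    have h1 : (0:ℝ) < (1 - A).det := hposdef.det_pos
    have h2 : (A - 1) = -(1 - A) := by rw [neg_sub]
    rw [h2, Matrix.det_neg]
    refine IsUnit.mul ?_ (isUnit_iff_ne_zero.mpr (ne_of_gt h1))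
    exact (IsUnit.neg isUnit_one).pow _
  have hinvmul : (A - 1)⁻¹ * (A - 1) = 1 := Matrix.nonsing_inv_mul _ hdet
  -- eigenvalue bounds
  have hlam0 : ∀ i, 0 ≤ lam i := fun i => hA0.eigenvalues_nonneg i
  have hlamσ : ∀ i, lam i ≤ σ := by
    intro i
    have hv := hAσ.dotProduct_mulVec_nonneg ⇑(hHerm.eigenvectorBasis i)
    have hnorm : ⇑(hHerm.eigenvectorBasis i) ⬝ᵥ ⇑(hHerm.eigenvectorBasis i) = 1 := by
      have h1 := hHerm.eigenvectorBasis.orthonormal.1 i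
      have h2 := ampe_inner_dot (hHerm.eigenvectorBasis i) (hHerm.eigenvectorBasis i)
      rw [real_inner_self_eq_norm_sq, h1] at h2
      rw [← h2]; norm_num
    rw [star_trivial, Matrix.sub_mulVec, Matrix.smul_mulVec, Matrix.one_mulVec,
      hHerm.mulVec_eigenvectorBasis, dotProduct_sub, dotProduct_smul,
      dotProduct_smul, smul_eq_mul, smul_eq_mul, hnorm] at hv
    simpa using hv
  have hσ0 : 0 ≤ σ := le_trans (hlam0 ⟨0, hn⟩) (hlamσ ⟨0, hn⟩)
  -- key reduction
  have key : ∀ (c : Fin (k+1) → ℝ) (M : ℝ), 0 ≤ M →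
      (∀ i, |∑ j : Fin (k+1), c j * lam i ^ (j:ℕ)| ≤ M) → (∑ j, c j = 1) →
      euclNorm ((∑ i : Fin (k+1), cstar i • x i) - xstar) ≤
        (‖A - 1‖ * ‖(A - 1)⁻¹‖) * M * euclNorm (x 0 - xstar) := by
    intro c M hM hpc hc1
    have hstep1 : (A - 1)⁻¹ *ᵥ (U *ᵥ cstar) = S cstar *ᵥ e := by
      rw [hUc, Matrix.mulVec_mulVec, hinvmul, Matrix.one_mulVec]
    calc euclNorm ((∑ i : Fin (k+1), cstar i • x i) - xstar)
        = euclNorm ((A - 1)⁻¹ *ᵥ (U *ᵥ cstar)) := by rw [hstep1, hsum]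
      _ ≤ ‖(A - 1)⁻¹‖ * euclNorm (U *ᵥ cstar) := ampe_opNorm_mulVec _ _
      _ ≤ ‖(A - 1)⁻¹‖ * euclNorm (U *ᵥ c) := by
          have := hmin c hc1
          have hnn : (0:ℝ) ≤ ‖(A - 1)⁻¹‖ := norm_nonneg _
          exact mul_le_mul_of_nonneg_left this hnn
      _ = ‖(A - 1)⁻¹‖ * euclNorm ((A - 1) *ᵥ (S c *ᵥ e)) := by rw [hUc]
      _ ≤ ‖(A - 1)⁻¹‖ * (‖A - 1‖ * euclNorm (S c *ᵥ e)) := by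
          exact mul_le_mul_of_nonneg_left (ampe_opNorm_mulVec _ _) (norm_nonneg _)
      _ ≤ ‖(A - 1)⁻¹‖ * (‖A - 1‖ * (M * euclNorm e)) := by
          refine mul_le_mul_of_nonneg_left ?_ (norm_nonneg _)
          exact mul_le_mul_of_nonneg_left (ampe_specBound A hHerm c M hM hpc e) (norm_nonneg _)
      _ = (‖A - 1‖ * ‖(A - 1)⁻¹‖) * M * euclNorm (x 0 - xstar) := by
          rw [he]; ring
  rcases eq_or_lt_of_le hσ0 with hσe | hσpos
  · -- σ = 0
    have hσ0' : σ = 0 := hσe.symm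
    subst hσ0'
    have hz0 : ζ = 0 := by rw [hζ]; norm_num
    rcases Nat.eq_zero_or_pos k with rfl | hk
    · -- k = 0
      have h1 : (2 * ζ ^ 0 / (1 + ζ ^ (2 * 0))) = 1 := by norm_num
      rw [h1]
      refine le_trans (key (fun _ => 1) 1 zero_le_one ?_ ?_) (le_of_eq ?_)
      · intro i
        simp
      · simp
      · ring
    · -- k ≥ 1
      have hzk : ζ ^ k = 0 := by rw [hz0]; exact zero_pow (by omega)
      have hz2k : ζ ^ (2*k) = 0 := by rw [hz0]; exact zero_pow (by omega)
      have hlamz : ∀ i, lam i = 0 := fun i => le_antisymm (hlamσ i) (hlam0 i)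
      refine le_trans (key (fun j => if j = Fin.last k then (1:ℝ) else 0) 0 le_rfl ?_ ?_)
        (le_of_eq ?_)
      · intro i
        have hsz : ∑ j : Fin (k+1), (if j = Fin.last k then (1:ℝ) else 0) * lam i ^ (j:ℕ) = 0 := by
          apply Finset.sum_eq_zero
          intro j _
          by_cases hj : j = Fin.last k
          · subst hj
            simp [Fin.val_last, hlamz i, zero_pow (show k ≠ 0 by omega)]
          · simp [hj]
        rw [hsz]; simp
      · simp
      · rw [hzk, hz2k]; ring
  · -- σ > 0
    have hzpos : 0 < ζ := ampe_zeta_pos hσpos hσ hζ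
    have hzk : (0:ℝ) < ζ ^ k := by positivity
    have hz2k : (0:ℝ) < 1 + ζ ^ (2*k) := by positivity
    set Tv : ℝ := (1 + ζ^(2*k))/(2 * ζ^k) with hTv
    have hTvpos : 0 < Tv := by rw [hTv]; positivity
    have hTvne : Tv ≠ 0 := ne_of_gt hTvpos
    have hTveval : (Polynomial.Chebyshev.T ℝ (k:ℤ)).eval (2/σ - 1) = Tv :=
      ampe_tval_eq hσpos hσ hζ k
    set Qp : Polynomial ℝ := Polynomial.C Tv⁻¹ *
      ((Polynomial.Chebyshev.T ℝ (k:ℤ)).comp (Polynomial.C (2/σ) * Polynomial.X - 1)) with hQp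
    have hdeg : Qp.natDegree ≤ k := by
      rw [hQp]
      refine le_trans (Polynomial.natDegree_mul_le) ?_
      rw [Polynomial.natDegree_C, zero_add]
      refine le_trans (Polynomial.natDegree_comp_le) ?_
      have h1 : (Polynomial.C (2/σ) * Polynomial.X - 1 : Polynomial ℝ).natDegree ≤ 1 := by
        refine le_trans (Polynomial.natDegree_sub_le _ _) ?_
        simp only [max_le_iff]
        constructor
        · refine le_trans (Polynomial.natDegree_mul_le) ?_
          simp
        · simp
      calc (Polynomial.Chebyshev.T ℝ (k:ℤ)).natDegree *
            (Polynomial.C (2/σ) * Polynomial.X - 1 : Polynomial ℝ).natDegree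
          ≤ k * 1 := Nat.mul_le_mul (ampe_chebNatDegreeLe k) h1
        _ = k := by omega
    have hQeval : ∀ t : ℝ, Qp.eval t
        = Tv⁻¹ * (Polynomial.Chebyshev.T ℝ (k:ℤ)).eval (2/σ * t - 1) := by
      intro t
      rw [hQp]
      simp [Polynomial.eval_comp]
    have hc1 : ∑ j : Fin (k+1), Qp.coeff (j:ℕ) = 1 := by
      have h1 := ampe_poly_eval_fin Qp hdeg 1
      simp only [one_pow, mul_one] at h1
      rw [h1, hQeval, mul_one, hTveval, inv_mul_cancel₀ hTvne]
    have hM : (0:ℝ) ≤ 2 * ζ^k / (1 + ζ^(2*k)) := by positivity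
    have hMinv : Tv⁻¹ = 2 * ζ^k / (1 + ζ^(2*k)) := by
      rw [hTv, inv_div]
    refine le_trans (key (fun j => Qp.coeff (j:ℕ)) (2 * ζ^k / (1 + ζ^(2*k))) hM ?_ hc1)
      (le_of_eq (by ring))
    intro i
    rw [ampe_poly_eval_fin Qp hdeg (lam i), hQeval]
    rw [abs_mul, abs_inv, abs_of_pos hTvpos, ← hMinv]
    have harg1 : -1 ≤ 2/σ * lam i - 1 := by
      have := hlam0 i
      have h2 : 0 ≤ 2/σ * lam i := by positivity
      linarith
    have harg2 : 2/σ * lam i - 1 ≤ 1 := by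
      have h1 := hlamσ i
      have h2 : 2/σ * lam i ≤ 2/σ * σ := by
        apply mul_le_mul_of_nonneg_left h1
        positivity
      have h3 : 2/σ * σ = 2 := by field_simp
      linarith
    have := ampe_chebAbsLe k _ harg1 harg2
    calc Tv⁻¹ * |(Polynomial.Chebyshev.T ℝ (k:ℤ)).eval (2/σ * lam i - 1)|
        ≤ Tv⁻¹ * 1 := mul_le_mul_of_nonneg_left this (le_of_lt (by positivity))
      _ = Tv⁻¹ := mul_one _
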